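/- Let X be a real Banach space, U ⊆ X open, and φ : U → ℝ a real-valued function. Suppose φ attains a local minimum or a local maximum at a point x₀ ∈ U, and suppose Jφ(x₀) ⊆ X* is a pseudo-Jacobian of φ at x₀. Then 0 belongs to the weak-star closed convex hull of Jφ(x₀) in X*. -/

import Mathlib

open Filter Topology Metric Set Bornology

noncomputable section

/-- Upper right-hand Dini directional derivative of `φ` at `x` in direction `v`. -/
def diniUpper {X : Type*} [NormedAddCommGroup X] [NormedSpace ℝ X]
    (φ : X → ℝ) (x v : X) : ℝ :=
  Filter.limsup (fun t : ℝ => (φ (x + t • v) - φ x) / t) (𝓝[>] (0 : ℝ))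

/-- `J` is a pseudo-Jacobian of `f` at `x`: `J` is a nonempty set of bounded linear
operators such that for every continuous linear functional `p` on `Y` and every
direction `v`, the upper Dini derivative of `p ∘ f` at `x` in direction `v` is bounded
by `sup {p (T v) : T ∈ J}`. -/
def IsPseudoJacobianAt {X Y : Type*} [NormedAddCommGroup X] [NormedSpace ℝ X]
    [NormedAddCommGroup Y] [NormedSpace ℝ Y]
    (f : X → Y) (J : Set (X →L[ℝ] Y)) (x : X) : Prop :=
  J.Nonempty ∧ ∀ (p : Y →L[ℝ] ℝ) (v : X),
    diniUpper (fun z => p (f z)) x v ≤ sSup ((fun T : X →L[ℝ] Y => p (T v)) '' J)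


theorem weakdual_rep {X : Type*} [NormedAddCommGroup X] [NormedSpace ℝ X]
    (f : WeakDual ℝ X →L[ℝ] ℝ) : ∃ v : X, ∀ T : WeakDual ℝ X, f T = T v := by
  have hb := LinearMap.hasBasis_weakBilin (topDualPairing ℝ X)
  have hcont : f ⁻¹' (Metric.ball 0 1) ∈ 𝓝 (0 : WeakDual ℝ X) := by
    have := f.continuous.tendsto 0
    rw [map_zero] at this
    exact this (Metric.ball_mem_nhds 0 one_pos)
  replace hcont := hb.mem_iff.mp hcont
  obtain ⟨U, hU, hUsub⟩ := hcont
  obtain ⟨I, r, hr, rfl⟩ := (SeminormFamily.basisSets_iff _).mp hU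
  set L : I → (WeakDual ℝ X →ₗ[ℝ] ℝ) := fun i => (topDualPairing ℝ X).flip (i : X) with hL
  have hker : ⨅ i, LinearMap.ker (L i) ≤ LinearMap.ker (f : WeakDual ℝ X →ₗ[ℝ] ℝ) := by
    intro T hT
    simp only [Submodule.mem_iInf, LinearMap.mem_ker, hL] at hT
    have hT' : ∀ v ∈ I, T v = 0 := by
      intro v hv
      exact hT ⟨v, hv⟩
    have key : ∀ c : ℝ, |c| * |f T| < 1 := by
      intro c
      have hmem : (c • T : WeakDual ℝ X) ∈ (I.sup (topDualPairing ℝ X).toSeminormFamily).ball 0 r := by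
        rw [Seminorm.ball_finset_sup_eq_iInter _ _ _ hr]
        refine Set.mem_iInter₂.mpr fun v hv => ?_
        change ((topDualPairing ℝ X).toSeminormFamily v) (c • (show X →L[ℝ] ℝ from T) - 0) < r
        rw [sub_zero]
        simp only [LinearMap.toSeminormFamily_apply]
        show ‖c * T v‖ < r
        rw [hT' v hv, mul_zero, norm_zero]
        exact hr
      have h1 : f (c • T) ∈ Metric.ball (0:ℝ) 1 := hUsub hmem
      simp only [Set.mem_preimage, Metric.mem_ball, dist_zero_right, Real.norm_eq_abs] at h1
      rw [map_smul, smul_eq_mul] at h1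
      rwa [← abs_mul]
    have h5 : f T = 0 := by
      by_contra hne
      have h2 := key (1 / |f T|)
      rw [abs_div, abs_one, abs_abs, div_mul_cancel₀ 1 (abs_ne_zero.mpr hne)] at h2
      exact lt_irrefl 1 h2
    exact h5
  have hspan := mem_span_of_iInf_ker_le_ker hker
  rw [Submodule.mem_span_range_iff_exists_fun] at hspan
  obtain ⟨c, hc⟩ := hspan
  refine ⟨∑ i ∈ I.attach, c i • (i : X), fun T => ?_⟩
  have h3 := LinearMap.congr_fun hc T
  simp only [LinearMap.coe_sum, Finset.sum_apply, LinearMap.smul_apply] at h3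
  rw [Finset.univ_eq_attach] at h3
  have h7 : T (∑ i ∈ I.attach, c i • (i : X)) = ∑ i ∈ I.attach, c i • T (i : X) := by
    rw [map_sum]
    exact Finset.sum_congr rfl fun i _ => by rw [map_smul]
  rw [h7]
  exact h3.symm


theorem limsup_contra {g : ℝ → ℝ} (h1 : ∀ᶠ t in 𝓝[>] (0:ℝ), 0 ≤ g t)
    (h2 : Filter.limsup g (𝓝[>] (0:ℝ)) < 0) : False := by
  rw [Filter.limsup_eq] at h2
  set S := {a | ∀ᶠ t in 𝓝[>] (0:ℝ), g t ≤ a} with hS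
  have hne : S.Nonempty := by
    by_contra h
    rw [Set.not_nonempty_iff_eq_empty] at h
    rw [h, Real.sInf_empty] at h2
    linarith
  obtain ⟨a, ha, halt⟩ := exists_lt_of_csInf_lt hne h2
  obtain ⟨t, h0t, hta⟩ := (h1.and ha).exists
  linarith


/-- Optimality condition: if `φ` attains a local minimum or maximum at `x₀` and
`J` is a pseudo-Jacobian of `φ` at `x₀`, then `0` belongs to the weak-star closed
convex hull of `J` in the dual space. -/
theorem optimality_condition
    {X : Type*} [NormedAddCommGroup X] [NormedSpace ℝ X] [CompleteSpace X]
    {U : Set X} (hUopen : IsOpen U)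
    {φ : X → ℝ} {x₀ : X} (hx₀ : x₀ ∈ U)
    (hext : IsLocalMin φ x₀ ∨ IsLocalMax φ x₀)
    {J : Set (X →L[ℝ] ℝ)} (hJ : IsPseudoJacobianAt φ J x₀) :
    (0 : WeakDual ℝ X) ∈ closure (convexHull ℝ
      ((StrongDual.toWeakDual : (X →L[ℝ] ℝ) → WeakDual ℝ X) '' J)) := by
  obtain ⟨hJne, hJ2⟩ := hJ
  by_contra h0
  haveI : LocallyConvexSpace ℝ (WeakDual ℝ X) := WeakBilin.locallyConvexSpace
  obtain ⟨f, u, hfu, hub⟩ := geometric_hahn_banach_point_closed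
    ((convex_convexHull ℝ _).closure) isClosed_closure h0
  rw [map_zero] at hfu
  obtain ⟨v, hv⟩ := weakdual_rep f
  have hTv : ∀ T ∈ J, u < T v := by
    intro T hT
    have hmem : (StrongDual.toWeakDual T) ∈ closure (convexHull ℝ
        ((StrongDual.toWeakDual : (X →L[ℝ] ℝ) → WeakDual ℝ X) '' J)) :=
      subset_closure (subset_convexHull ℝ _ (Set.mem_image_of_mem _ hT))
    have h1 := hub _ hmem
    rwa [hv] at h1
  -- tendsto fact for any direction w
  have htend : ∀ w : X, Filter.Tendsto (fun t : ℝ => x₀ + t • w) (𝓝[>] (0:ℝ)) (𝓝 x₀) := by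
    intro w
    have hcont : Continuous (fun t : ℝ => x₀ + t • w) := by continuity
    have := hcont.tendsto 0
    simp only [zero_smul, add_zero] at this
    exact this.mono_left nhdsWithin_le_nhds
  rcases hext with hmin | hmax
  · -- local min: use p = id, direction -v
    have hle := hJ2 (ContinuousLinearMap.id ℝ ℝ) (-v)
    have hsup : sSup ((fun T : X →L[ℝ] ℝ => (ContinuousLinearMap.id ℝ ℝ) (T (-v))) '' J) ≤ -u := by
      apply csSup_le (hJne.image _)
      rintro b ⟨T, hT, rfl⟩
      simp only [ContinuousLinearMap.id_apply, map_neg]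
      linarith [hTv T hT]
    have h2 : diniUpper (fun z => (ContinuousLinearMap.id ℝ ℝ) (φ z)) x₀ (-v) < 0 := by
      have : (0:ℝ) < u := hfu
      calc diniUpper _ x₀ (-v) ≤ -u := hle.trans hsup
        _ < 0 := by linarith
    refine limsup_contra ?_ h2
    have hev := (htend (-v)).eventually hmin
    filter_upwards [hev, self_mem_nhdsWithin] with t h1 h2
    simp only [ContinuousLinearMap.id_apply]
    have ht : (0:ℝ) < t := h2
    exact div_nonneg (by linarith [h1]) ht.le
  · -- local max: use p = -id, direction v
    have hle := hJ2 (-(ContinuousLinearMap.id ℝ ℝ)) v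
    have hsup : sSup ((fun T : X →L[ℝ] ℝ => (-(ContinuousLinearMap.id ℝ ℝ)) (T v)) '' J) ≤ -u := by
      apply csSup_le (hJne.image _)
      rintro b ⟨T, hT, rfl⟩
      simp only [ContinuousLinearMap.neg_apply, ContinuousLinearMap.id_apply]
      linarith [hTv T hT]
    have h2 : diniUpper (fun z => (-(ContinuousLinearMap.id ℝ ℝ)) (φ z)) x₀ v < 0 := by
      have : (0:ℝ) < u := hfu
      calc diniUpper _ x₀ v ≤ -u := hle.trans hsup
        _ < 0 := by linarith
    refine limsup_contra ?_ h2
    have hev := (htend v).eventually hmax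
    filter_upwards [hev, self_mem_nhdsWithin] with t h1 h2
    simp only [ContinuousLinearMap.neg_apply, ContinuousLinearMap.id_apply]
    have ht : (0:ℝ) < t := h2
    exact div_nonneg (by linarith [h1]) ht.le

end
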